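/- Let n ≥ 2 and let A^{(1)},…,A^{(m)} be real symmetric n×n matrices. Fix Q ∈ SO(n) and 1 ≤ i < j ≤ n, and define h(θ) := Σ_{ℓ=1}^m Σ_{s=1}^n (((Q G(i,j,θ))ᵀ A^{(ℓ)} (Q G(i,j,θ)))_{ss})², and τ(x) := h(arctan x) for x ∈ ℝ. Then for all x ∈ ℝ: τ(x) − τ(0) = [h'(0)(x − x³) + (1/2) h''(0) x²] / (1 + x²)², and τ'(x) = [h'(0)(1 − 6x² + x⁴) + h''(0)(x − x³)] / (1 + x²)³. -/

import Mathlib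

open Matrix Real Filter Set

attribute [local instance] Matrix.frobeniusNormedAddCommGroup Matrix.frobeniusNormedSpace

noncomputable def frobInner {n : ℕ} (A B : Matrix (Fin n) (Fin n) ℝ) : ℝ :=
  ∑ i, ∑ j, A i j * B i j

noncomputable def frobNorm {n : ℕ} (A : Matrix (Fin n) (Fin n) ℝ) : ℝ :=
  Real.sqrt (∑ i, ∑ j, (A i j) ^ 2)

def SOn (n : ℕ) : Set (Matrix (Fin n) (Fin n) ℝ) := {Q | Qᵀ * Q = 1 ∧ Q.det = 1}

noncomputable def grad {n : ℕ} (f : Matrix (Fin n) (Fin n) ℝ → ℝ)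
    (Q : Matrix (Fin n) (Fin n) ℝ) : Matrix (Fin n) (Fin n) ℝ :=
  Matrix.of fun k l => fderiv ℝ f Q (Matrix.single k l 1)

noncomputable def Lam {n : ℕ} (f : Matrix (Fin n) (Fin n) ℝ → ℝ)
    (Q : Matrix (Fin n) (Fin n) ℝ) : Matrix (Fin n) (Fin n) ℝ :=
  (1 / 2 : ℝ) • (Qᵀ * grad f Q - (grad f Q)ᵀ * Q)

noncomputable def projGrad {n : ℕ} (f : Matrix (Fin n) (Fin n) ℝ → ℝ)
    (Q : Matrix (Fin n) (Fin n) ℝ) : Matrix (Fin n) (Fin n) ℝ := Q * Lam f Q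

noncomputable def givens {n : ℕ} (i j : Fin n) (θ : ℝ) : Matrix (Fin n) (Fin n) ℝ :=
  Matrix.of fun k l =>
    if k = i ∧ l = i then Real.cos θ
    else if k = j ∧ l = j then Real.cos θ
    else if k = j ∧ l = i then Real.sin θ
    else if k = i ∧ l = j then -Real.sin θ
    else if k = l then 1 else 0

def deltaMat {n : ℕ} (i j : Fin n) : Matrix (Fin n) (Fin n) ℝ :=
  Matrix.of fun k l => if k = j ∧ l = i then 1 else if k = i ∧ l = j then -1 else 0

lemma sum_two {n : ℕ} {i j : Fin n} (hij : i ≠ j) (f : Fin n → ℝ) (a b : ℝ) :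
    ∑ k, (if k = i then a else if k = j then b else 0) * f k = a * f i + b * f j := by
  have h : ∀ k : Fin n, (if k = i then a else if k = j then b else 0) * f k
      = (if k = i then a * f i else 0) + (if k = j then b * f j else 0) := by
    intro k
    by_cases h1 : k = i
    · subst h1; simp [hij]
    · by_cases h2 : k = j
      · subst h2; simp [h1]
      · simp [h1, h2]
  simp_rw [h, Finset.sum_add_distrib, Finset.sum_ite_eq' Finset.univ, Finset.mem_univ, if_true]

lemma sum_two' {n : ℕ} {i j : Fin n} (hij : i ≠ j) (f : Fin n → ℝ) (a b : ℝ) :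
    ∑ k, f k * (if k = i then a else if k = j then b else 0) = f i * a + f j * b := by
  have h : ∀ k : Fin n, f k * (if k = i then a else if k = j then b else 0)
      = (if k = i then a else if k = j then b else 0) * f k := fun k => mul_comm _ _
  simp_rw [h, sum_two hij f a b, mul_comm]

lemma sum_delta {n : ℕ} (s0 : Fin n) (f : Fin n → ℝ) :
    ∑ k, (if k = s0 then (1:ℝ) else 0) * f k = f s0 := by
  simp [ite_mul]

lemma sum_delta' {n : ℕ} (s0 : Fin n) (f : Fin n → ℝ) :
    ∑ k, f k * (if k = s0 then (1:ℝ) else 0) = f s0 := by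
  simp [mul_ite]

lemma sum_ite_two {n : ℕ} {i j : Fin n} (hij : i ≠ j) (a b : ℝ) :
    ∑ k : Fin n, (if k = i then a else if k = j then b else 0) = a + b := by
  simpa using sum_two hij (fun _ => (1:ℝ)) a b

lemma givens_col_i {n : ℕ} {i j : Fin n} (hij : i ≠ j) (θ : ℝ) (k : Fin n) :
    givens i j θ k i = if k = i then Real.cos θ else if k = j then Real.sin θ else 0 := by
  simp only [givens, Matrix.of_apply]
  split_ifs <;> simp_all

lemma givens_col_j {n : ℕ} {i j : Fin n} (hij : i ≠ j) (θ : ℝ) (k : Fin n) :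
    givens i j θ k j = if k = i then -Real.sin θ else if k = j then Real.cos θ else 0 := by
  simp only [givens, Matrix.of_apply]
  split_ifs <;> simp_all

lemma givens_col_other {n : ℕ} {i j : Fin n} (θ : ℝ) {s : Fin n} (hsi : s ≠ i) (hsj : s ≠ j)
    (k : Fin n) : givens i j θ k s = if k = s then (1:ℝ) else 0 := by
  simp only [givens, Matrix.of_apply]
  split_ifs <;> simp_all

lemma key {n : ℕ} {i j : Fin n} (hij : i ≠ j) (M : Matrix (Fin n) (Fin n) ℝ)
    (hM : M j i = M i j) (θ : ℝ) :
    ∑ s, (((givens i j θ)ᵀ * M * givens i j θ) s s) ^ 2 =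
      ((∑ s, (M s s) ^ 2) - ((M i i - M j j) / 2) ^ 2 + (M i j) ^ 2)
      + (((M i i - M j j) / 2) ^ 2 - (M i j) ^ 2) * Real.cos (4 * θ)
      + (2 * ((M i i - M j j) / 2) * (M i j)) * Real.sin (4 * θ) := by
  set c := Real.cos θ
  set s := Real.sin θ
  have hGMi : ∀ l, ((givens i j θ)ᵀ * M) i l = c * M i l + s * M j l := by
    intro l
    rw [Matrix.mul_apply]
    simp only [Matrix.transpose_apply]
    calc ∑ k, givens i j θ k i * M k l
        = ∑ k, (if k = i then c else if k = j then s else 0) * M k l := by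
          refine Finset.sum_congr rfl fun k _ => ?_; rw [givens_col_i hij]
      _ = c * M i l + s * M j l := sum_two hij _ _ _
  have hGMj : ∀ l, ((givens i j θ)ᵀ * M) j l = -s * M i l + c * M j l := by
    intro l
    rw [Matrix.mul_apply]
    simp only [Matrix.transpose_apply]
    calc ∑ k, givens i j θ k j * M k l
        = ∑ k, (if k = i then -s else if k = j then c else 0) * M k l := by
          refine Finset.sum_congr rfl fun k _ => ?_; rw [givens_col_j hij]
      _ = -s * M i l + c * M j l := sum_two hij _ _ _
  have hGMo : ∀ {s0 : Fin n}, s0 ≠ i → s0 ≠ j → ∀ l, ((givens i j θ)ᵀ * M) s0 l = M s0 l := by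
    intro s0 hsi hsj l
    rw [Matrix.mul_apply]
    simp only [Matrix.transpose_apply]
    calc ∑ k, givens i j θ k s0 * M k l
        = ∑ k, (if k = s0 then (1:ℝ) else 0) * M k l := by
          refine Finset.sum_congr rfl fun k _ => ?_; rw [givens_col_other θ hsi hsj]
      _ = M s0 l := sum_delta _ _
  have hNii : ((givens i j θ)ᵀ * M * givens i j θ) i i
      = c * (c * M i i + s * M j i) + s * (c * M i j + s * M j j) := by
    rw [Matrix.mul_apply]
    calc ∑ l, ((givens i j θ)ᵀ * M) i l * givens i j θ l i
        = ∑ l, ((givens i j θ)ᵀ * M) i l * (if l = i then c else if l = j then s else 0) := by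
          refine Finset.sum_congr rfl fun l _ => ?_; rw [givens_col_i hij]
      _ = ((givens i j θ)ᵀ * M) i i * c + ((givens i j θ)ᵀ * M) i j * s := sum_two' hij _ _ _
      _ = _ := by rw [hGMi, hGMi]; ring
  have hNjj : ((givens i j θ)ᵀ * M * givens i j θ) j j
      = -s * (-s * M i i + c * M j i) + c * (-s * M i j + c * M j j) := by
    rw [Matrix.mul_apply]
    calc ∑ l, ((givens i j θ)ᵀ * M) j l * givens i j θ l j
        = ∑ l, ((givens i j θ)ᵀ * M) j l * (if l = i then -s else if l = j then c else 0) := by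
          refine Finset.sum_congr rfl fun l _ => ?_; rw [givens_col_j hij]
      _ = ((givens i j θ)ᵀ * M) j i * (-s) + ((givens i j θ)ᵀ * M) j j * c := sum_two' hij _ _ _
      _ = _ := by rw [hGMj, hGMj]; ring
  have hNoo : ∀ {s0 : Fin n}, s0 ≠ i → s0 ≠ j →
      ((givens i j θ)ᵀ * M * givens i j θ) s0 s0 = M s0 s0 := by
    intro s0 hsi hsj
    rw [Matrix.mul_apply]
    calc ∑ l, ((givens i j θ)ᵀ * M) s0 l * givens i j θ l s0
        = ∑ l, ((givens i j θ)ᵀ * M) s0 l * (if l = s0 then (1:ℝ) else 0) := by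
          refine Finset.sum_congr rfl fun l _ => ?_; rw [givens_col_other θ hsi hsj]
      _ = ((givens i j θ)ᵀ * M) s0 s0 := sum_delta' _ _
      _ = M s0 s0 := hGMo hsi hsj s0
  -- split the sum
  have split : (∑ s0, (((givens i j θ)ᵀ * M * givens i j θ) s0 s0) ^ 2) - (∑ s0, (M s0 s0) ^ 2)
      = ((((givens i j θ)ᵀ * M * givens i j θ) i i) ^ 2 - (M i i) ^ 2)
        + ((((givens i j θ)ᵀ * M * givens i j θ) j j) ^ 2 - (M j j) ^ 2) := by
    rw [← Finset.sum_sub_distrib]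
    have hterm : ∀ s0 : Fin n, (((givens i j θ)ᵀ * M * givens i j θ) s0 s0) ^ 2 - (M s0 s0) ^ 2
        = (if s0 = i then (((givens i j θ)ᵀ * M * givens i j θ) i i) ^ 2 - (M i i) ^ 2
           else if s0 = j then (((givens i j θ)ᵀ * M * givens i j θ) j j) ^ 2 - (M j j) ^ 2
           else 0) := by
      intro s0
      by_cases h1 : s0 = i
      · subst h1; rw [if_pos rfl]
      · by_cases h2 : s0 = j
        · subst h2; rw [if_neg h1, if_pos rfl]
        · rw [if_neg h1, if_neg h2, hNoo h1 h2]; ring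
    rw [Finset.sum_congr rfl fun s0 _ => hterm s0]
    exact sum_ite_two hij _ _
  have hc4 : Real.cos (4 * θ) = 2 * (Real.cos (2 * θ)) ^ 2 - 1 := by
    rw [show (4:ℝ) * θ = 2 * (2 * θ) by ring, Real.cos_two_mul]
  have hs4 : Real.sin (4 * θ) = 2 * Real.sin (2 * θ) * Real.cos (2 * θ) := by
    rw [show (4:ℝ) * θ = 2 * (2 * θ) by ring, Real.sin_two_mul]
  have hNii2 : ((givens i j θ)ᵀ * M * givens i j θ) i i
      = (M i i + M j j) / 2 + ((M i i - M j j) / 2) * Real.cos (2 * θ) + M i j * Real.sin (2 * θ) := by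
    rw [hNii, hM, Real.cos_two_mul, Real.sin_two_mul]
    linear_combination (M j j) * Real.sin_sq_add_cos_sq θ
  have hNjj2 : ((givens i j θ)ᵀ * M * givens i j θ) j j
      = (M i i + M j j) / 2 - ((M i i - M j j) / 2) * Real.cos (2 * θ) - M i j * Real.sin (2 * θ) := by
    rw [hNjj, hM, Real.cos_two_mul, Real.sin_two_mul]
    linear_combination (M i i) * Real.sin_sq_add_cos_sq θ
  have h1 : (∑ s0, (((givens i j θ)ᵀ * M * givens i j θ) s0 s0) ^ 2)
      = (∑ s0, (M s0 s0) ^ 2)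
        + ((((givens i j θ)ᵀ * M * givens i j θ) i i) ^ 2 - (M i i) ^ 2)
        + ((((givens i j θ)ᵀ * M * givens i j θ) j j) ^ 2 - (M j j) ^ 2) := by
    linarith [split]
  rw [h1, hNii2, hNjj2, hc4, hs4]
  linear_combination (2 * (M i j) ^ 2) * Real.sin_sq_add_cos_sq (2 * θ)

theorem stmt_9 {n m : ℕ} (hn : 2 ≤ n) (A : Fin m → Matrix (Fin n) (Fin n) ℝ)
    (hA : ∀ ℓ, (A ℓ)ᵀ = A ℓ)
    (Q : Matrix (Fin n) (Fin n) ℝ) (hQ : Q ∈ SOn n)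
    (i j : Fin n) (hij : i < j)
    (h : ℝ → ℝ)
    (hh : ∀ θ, h θ = ∑ ℓ : Fin m, ∑ s,
      (((Q * givens i j θ)ᵀ * A ℓ * (Q * givens i j θ)) s s) ^ 2)
    (τ : ℝ → ℝ) (hτ : ∀ x, τ x = h (Real.arctan x)) (x : ℝ) :
    τ x - τ 0 =
      (deriv h 0 * (x - x ^ 3) + (1 / 2) * deriv (deriv h) 0 * x ^ 2) / (1 + x ^ 2) ^ 2 ∧
    deriv τ x =
      (deriv h 0 * (1 - 6 * x ^ 2 + x ^ 4) + deriv (deriv h) 0 * (x - x ^ 3)) / (1 + x ^ 2) ^ 3 := by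
  have hne : i ≠ j := Fin.ne_of_lt hij
  set M : Fin m → Matrix (Fin n) (Fin n) ℝ := fun ℓ => Qᵀ * A ℓ * Q with hMdef
  have hMsym : ∀ ℓ, (M ℓ) j i = (M ℓ) i j := by
    intro ℓ
    have hT : (M ℓ)ᵀ = M ℓ := by
      simp only [hMdef, Matrix.transpose_mul, Matrix.transpose_transpose, hA, Matrix.mul_assoc]
    have := congrFun (congrFun hT i) j
    simpa [Matrix.transpose_apply] using this
  set K : ℝ := ∑ ℓ, ((∑ s, ((M ℓ) s s) ^ 2) - (((M ℓ) i i - (M ℓ) j j) / 2) ^ 2 + ((M ℓ) i j) ^ 2)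
    with hKdef
  set B : ℝ := ∑ ℓ, ((((M ℓ) i i - (M ℓ) j j) / 2) ^ 2 - ((M ℓ) i j) ^ 2) with hBdef
  set C : ℝ := ∑ ℓ, (2 * (((M ℓ) i i - (M ℓ) j j) / 2) * ((M ℓ) i j)) with hCdef
  set g : ℝ → ℝ := fun θ => K + B * Real.cos (4 * θ) + C * Real.sin (4 * θ) with hgdef
  have hg : h = g := by
    funext θ
    rw [hh θ]
    have hconj : ∀ ℓ, (Q * givens i j θ)ᵀ * A ℓ * (Q * givens i j θ)
        = (givens i j θ)ᵀ * (M ℓ) * givens i j θ := by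
      intro ℓ
      rw [Matrix.transpose_mul]
      simp only [hMdef, Matrix.mul_assoc]
    calc ∑ ℓ, ∑ s, (((Q * givens i j θ)ᵀ * A ℓ * (Q * givens i j θ)) s s) ^ 2
        = ∑ ℓ, (((∑ s, ((M ℓ) s s) ^ 2) - (((M ℓ) i i - (M ℓ) j j) / 2) ^ 2 + ((M ℓ) i j) ^ 2)
            + ((((M ℓ) i i - (M ℓ) j j) / 2) ^ 2 - ((M ℓ) i j) ^ 2) * Real.cos (4 * θ)
            + (2 * (((M ℓ) i i - (M ℓ) j j) / 2) * ((M ℓ) i j)) * Real.sin (4 * θ)) := by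
          refine Finset.sum_congr rfl fun ℓ _ => ?_
          rw [hconj ℓ]
          exact key hne (M ℓ) (hMsym ℓ) θ
      _ = g θ := by
          simp only [hgdef, Finset.sum_add_distrib, ← Finset.sum_mul, hKdef, hBdef, hCdef]
  have hgd : ∀ θ, HasDerivAt g (-4 * B * Real.sin (4 * θ) + 4 * C * Real.cos (4 * θ)) θ := by
    intro θ
    have h1 : HasDerivAt (fun t : ℝ => 4 * t) 4 θ := by
      simpa using (hasDerivAt_id θ).const_mul (4 : ℝ)
    have hc : HasDerivAt (fun t => Real.cos (4 * t)) (-Real.sin (4 * θ) * 4) θ :=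
      (Real.hasDerivAt_cos (4 * θ)).comp θ h1
    have hs : HasDerivAt (fun t => Real.sin (4 * t)) (Real.cos (4 * θ) * 4) θ :=
      (Real.hasDerivAt_sin (4 * θ)).comp θ h1
    have hKc : HasDerivAt (fun _ : ℝ => K) 0 θ := hasDerivAt_const θ K
    have h2 := (hKc.add (hc.const_mul B)).add (hs.const_mul C)
    have h3 : 0 + B * (-Real.sin (4 * θ) * 4) + C * (Real.cos (4 * θ) * 4)
        = -4 * B * Real.sin (4 * θ) + 4 * C * Real.cos (4 * θ) := by ring
    exact h3 ▸ h2
  have hd1 : deriv h = fun θ => -4 * B * Real.sin (4 * θ) + 4 * C * Real.cos (4 * θ) := by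
    rw [hg]; funext θ; exact (hgd θ).deriv
  have hD1 : deriv h 0 = 4 * C := by rw [hd1]; simp
  have hgd2 : ∀ θ : ℝ, HasDerivAt (fun θ => -4 * B * Real.sin (4 * θ) + 4 * C * Real.cos (4 * θ))
      (-16 * B * Real.cos (4 * θ) - 16 * C * Real.sin (4 * θ)) θ := by
    intro θ
    have h1 : HasDerivAt (fun t : ℝ => 4 * t) 4 θ := by
      simpa using (hasDerivAt_id θ).const_mul (4 : ℝ)
    have hc : HasDerivAt (fun t => Real.cos (4 * t)) (-Real.sin (4 * θ) * 4) θ :=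
      (Real.hasDerivAt_cos (4 * θ)).comp θ h1
    have hs : HasDerivAt (fun t => Real.sin (4 * t)) (Real.cos (4 * θ) * 4) θ :=
      (Real.hasDerivAt_sin (4 * θ)).comp θ h1
    have h2 := (hs.const_mul (-4 * B)).add (hc.const_mul (4 * C))
    have h3 : -4 * B * (Real.cos (4 * θ) * 4) + 4 * C * (-Real.sin (4 * θ) * 4)
        = -16 * B * Real.cos (4 * θ) - 16 * C * Real.sin (4 * θ) := by ring
    exact h3 ▸ h2
  have hD2 : deriv (deriv h) 0 = -16 * B := by
    rw [hd1]
    have := (hgd2 0).deriv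
    rw [this]; simp
  -- trig values at arctan x
  have hden : (1 : ℝ) + x ^ 2 ≠ 0 := by positivity
  have hsq : Real.sqrt (1 + x ^ 2) ^ 2 = 1 + x ^ 2 := Real.sq_sqrt (by positivity)
  have hsqrt_ne : Real.sqrt (1 + x ^ 2) ≠ 0 := by positivity
  have c2 : Real.cos (2 * Real.arctan x) = (1 - x ^ 2) / (1 + x ^ 2) := by
    rw [Real.cos_two_mul, Real.cos_arctan, div_pow, one_pow, hsq]
    field_simp
    ring
  have s2 : Real.sin (2 * Real.arctan x) = 2 * x / (1 + x ^ 2) := by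
    have hss : Real.sqrt (1 + x ^ 2) * Real.sqrt (1 + x ^ 2) = 1 + x ^ 2 :=
      Real.mul_self_sqrt (by positivity)
    have hstep : 2 * (x / Real.sqrt (1 + x ^ 2)) * (1 / Real.sqrt (1 + x ^ 2))
        = 2 * x / (Real.sqrt (1 + x ^ 2) * Real.sqrt (1 + x ^ 2)) := by ring
    rw [Real.sin_two_mul, Real.sin_arctan, Real.cos_arctan, hstep, hss]
  have c4x : Real.cos (4 * Real.arctan x) = (1 - 6 * x ^ 2 + x ^ 4) / (1 + x ^ 2) ^ 2 := by
    rw [show (4 : ℝ) * Real.arctan x = 2 * (2 * Real.arctan x) by ring, Real.cos_two_mul, c2]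
    field_simp
    ring
  have s4x : Real.sin (4 * Real.arctan x) = (4 * x - 4 * x ^ 3) / (1 + x ^ 2) ^ 2 := by
    rw [show (4 : ℝ) * Real.arctan x = 2 * (2 * Real.arctan x) by ring, Real.sin_two_mul, s2, c2]
    field_simp
    ring
  have hT : τ x = K + B * ((1 - 6 * x ^ 2 + x ^ 4) / (1 + x ^ 2) ^ 2)
      + C * ((4 * x - 4 * x ^ 3) / (1 + x ^ 2) ^ 2) := by
    rw [hτ, hg, hgdef]
    simp only []
    rw [c4x, s4x]
  have hT0 : τ 0 = K + B := by
    rw [hτ, hg, hgdef]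
    simp [Real.arctan_zero]
  constructor
  · rw [hT, hT0, hD1, hD2]
    field_simp
    ring
  · have hτg : τ = fun y => g (Real.arctan y) := by
      funext y; rw [hτ, hg]
    have hcomp : HasDerivAt (fun y => g (Real.arctan y))
        ((-4 * B * Real.sin (4 * Real.arctan x) + 4 * C * Real.cos (4 * Real.arctan x))
          * (1 / (1 + x ^ 2))) x :=
      (hgd (Real.arctan x)).comp x (Real.hasDerivAt_arctan x)
    rw [hτg, hcomp.deriv, hD1, hD2, c4x, s4x]
    field_simp
    ring
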